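/- If l₂ ≤ d, l₁ ≤ n − 2d, and l₂ > n − 2d, then the two-contour system enters a state of free motion from every admissible initial state. -/

import Mathlib

open scoped Classical

namespace TwoContour

/-- A state of the two-contour system: the cells of the front particles
of cluster 1 and cluster 2. -/
abbrev State (n : ℕ) := ZMod n × ZMod n

/-- Cell `c` is occupied by a cluster of length `l` whose front particle is at cell `α`:
the cluster occupies cells `α, α-1, …, α-(l-1)` (mod `n`). -/
def occ (n : ℕ) (α : ZMod n) (l : ℕ) (c : ZMod n) : Prop :=
  ∃ k : ℕ, k < l ∧ c = α - (k : ZMod n)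

/-- Cluster 1 is delayed: its front stands at node 1 (cell 0 of contour 1) while
cluster 2 occupies node 1 (cells `d`, `d+1` of contour 2) or stands at node 1
(competition at node 1 is resolved in favor of cluster 2); or its front stands at
node 2 (cell `d` of contour 1) while cluster 2 occupies node 2 (cells 0, 1 of contour 2). -/
def blocked1 (n l1 l2 d : ℕ) (s : State n) : Prop :=
  (s.1 = 0 ∧ ((occ n s.2 l2 (d : ZMod n) ∧ occ n s.2 l2 ((d : ZMod n) + 1)) ∨ s.2 = (d : ZMod n)))
  ∨ (s.1 = (d : ZMod n) ∧ occ n s.2 l2 0 ∧ occ n s.2 l2 1)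

/-- Cluster 2 is delayed: its front stands at node 2 (cell 0 of contour 2) while
cluster 1 occupies node 2 (cells `d`, `d+1` of contour 1) or stands at node 2
(competition at node 2 is resolved in favor of cluster 1); or its front stands at
node 1 (cell `d` of contour 2) while cluster 1 occupies node 1 (cells 0, 1 of contour 1). -/
def blocked2 (n l1 l2 d : ℕ) (s : State n) : Prop :=
  (s.2 = 0 ∧ ((occ n s.1 l1 (d : ZMod n) ∧ occ n s.1 l1 ((d : ZMod n) + 1)) ∨ s.1 = (d : ZMod n)))
  ∨ (s.2 = (d : ZMod n) ∧ occ n s.1 l1 0 ∧ occ n s.1 l1 1)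

/-- One time step of the deterministic dynamics: each non-delayed cluster advances one cell. -/
noncomputable def step (n l1 l2 d : ℕ) (s : State n) : State n :=
  (if blocked1 n l1 l2 d s then s.1 else s.1 + 1,
   if blocked2 n l1 l2 d s then s.2 else s.2 + 1)

/-- A state of free motion: from this state on, neither cluster is ever delayed. -/
def FreeState (n l1 l2 d : ℕ) (s : State n) : Prop :=
  ∀ t : ℕ, ¬ blocked1 n l1 l2 d ((step n l1 l2 d)^[t] s) ∧
           ¬ blocked2 n l1 l2 d ((step n l1 l2 d)^[t] s)

/-- A state of collapse: from this state on, no particle of either cluster ever moves. -/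
def CollapseState (n l1 l2 d : ℕ) (s : State n) : Prop :=
  ∀ t : ℕ, blocked1 n l1 l2 d ((step n l1 l2 d)^[t] s) ∧
           blocked2 n l1 l2 d ((step n l1 l2 d)^[t] s)

/-- `s` lies on a limit cycle of period `T`. -/
def Periodic (n l1 l2 d : ℕ) (s : State n) (T : ℕ) : Prop :=
  0 < T ∧ (step n l1 l2 d)^[T] s = s

/-- Number of moves of cluster 1 during the first `T` steps starting from `s`. -/
noncomputable def moves1 (n l1 l2 d : ℕ) (s : State n) (T : ℕ) : ℕ :=
  ((Finset.range T).filter (fun t => ¬ blocked1 n l1 l2 d ((step n l1 l2 d)^[t] s))).card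

/-- Number of moves of cluster 2 during the first `T` steps starting from `s`. -/
noncomputable def moves2 (n l1 l2 d : ℕ) (s : State n) (T : ℕ) : ℕ :=
  ((Finset.range T).filter (fun t => ¬ blocked2 n l1 l2 d ((step n l1 l2 d)^[t] s))).card

/-- An admissible state: the two clusters do not occupy the same node simultaneously. -/
def Admissible (n l1 l2 d : ℕ) (s : State n) : Prop :=
  ¬ (occ n s.1 l1 0 ∧ occ n s.1 l1 1 ∧
     occ n s.2 l2 (d : ZMod n) ∧ occ n s.2 l2 ((d : ZMod n) + 1)) ∧
  ¬ (occ n s.1 l1 (d : ZMod n) ∧ occ n s.1 l1 ((d : ZMod n) + 1) ∧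
     occ n s.2 l2 0 ∧ occ n s.2 l2 1)


-- auxiliary development

structure Hyp (n l1 l2 d : ℕ) : Prop where
  hn : 0 < n
  hd : 0 < d
  h2d : 2 * d ≤ n
  hl1pos : 0 < l1
  hl2pos : 0 < l2
  hl2n : l2 < n
  hl1d : l1 ≤ d
  hld : l2 ≤ d
  hA : l1 + 2 * d ≤ n
  hB : n < l2 + 2 * d

lemma Hyp.l1d {n l1 l2 d : ℕ} (H : Hyp n l1 l2 d) : l1 < d := by
  have := H.hA; have := H.hB; have := H.hld; omega

lemma occ_iff {n : ℕ} (hn : 0 < n) {l : ℕ} (hl : l ≤ n) (b c : ZMod n) :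
    occ n b l c ↔ (b - c).val < l := by
  haveI : NeZero n := ⟨hn.ne'⟩
  constructor
  · rintro ⟨k, hk, rfl⟩
    rwa [sub_sub_cancel, ZMod.val_cast_of_lt (hk.trans_le hl)]
  · intro h
    exact ⟨(b - c).val, h, by rw [ZMod.natCast_zmod_val]; ring⟩

lemma val_sub_one {n : ℕ} (hn : 0 < n) {u : ZMod n} (hu : 0 < u.val) :
    (u - 1).val = u.val - 1 := by
  haveI : NeZero n := ⟨hn.ne'⟩
  have h2 : u - 1 = ((u.val - 1 : ℕ) : ZMod n) := by
    rw [Nat.cast_sub hu, Nat.cast_one, ZMod.natCast_zmod_val]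
  rw [h2, ZMod.val_cast_of_lt (by have := ZMod.val_lt u; omega)]

lemma neg_one_val {n : ℕ} (hn : 0 < n) : ((0 : ZMod n) - 1).val = n - 1 := by
  have h2 : ((n - 1 : ℕ) : ZMod n) = 0 - 1 := by
    rw [Nat.cast_sub hn, Nat.cast_one, ZMod.natCast_self]
  rw [← h2, ZMod.val_cast_of_lt (by omega)]

lemma pair_iff {n : ℕ} (hn : 0 < n) {l : ℕ} (hl : l < n) (u : ZMod n) :
    (u.val < l ∧ (u - 1).val < l) ↔ (0 < u.val ∧ u.val < l) := by
  haveI : NeZero n := ⟨hn.ne'⟩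
  by_cases h0 : u.val = 0
  · have hu : u = 0 := (ZMod.val_eq_zero u).1 h0
    rw [hu, neg_one_val hn]
    simp only [ZMod.val_zero]
    omega
  · rw [val_sub_one hn (Nat.pos_of_ne_zero h0)]
    omega

lemma blocked1_iff {n l1 l2 d : ℕ} (hn : 0 < n) (hl2pos : 0 < l2) (hl2n : l2 < n) (s : State n) :
    blocked1 n l1 l2 d s ↔
      (s.1 = 0 ∧ (s.2 - (d : ZMod n)).val < l2) ∨
      (s.1 = (d : ZMod n) ∧ 0 < s.2.val ∧ s.2.val < l2) := by
  haveI : NeZero n := ⟨hn.ne'⟩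
  unfold blocked1
  rw [occ_iff hn hl2n.le, occ_iff hn hl2n.le, occ_iff hn hl2n.le, occ_iff hn hl2n.le]
  have e1 : s.2 - ((d : ZMod n) + 1) = (s.2 - (d : ZMod n)) - 1 := by ring
  rw [e1, sub_zero, pair_iff hn hl2n, pair_iff hn hl2n]
  constructor
  · rintro (⟨ha, h | h⟩ | ⟨ha, h⟩)
    · exact Or.inl ⟨ha, h.2⟩
    · refine Or.inl ⟨ha, ?_⟩
      rw [h, sub_self, ZMod.val_zero]; exact hl2pos
    · exact Or.inr ⟨ha, h⟩
  · rintro (⟨ha, h⟩ | ⟨ha, h⟩)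
    · by_cases hz : s.2 = (d : ZMod n)
      · exact Or.inl ⟨ha, Or.inr hz⟩
      · refine Or.inl ⟨ha, Or.inl ⟨?_, h⟩⟩
        refine Nat.pos_of_ne_zero fun hv => hz ?_
        exact sub_eq_zero.1 ((ZMod.val_eq_zero _).1 hv)
    · exact Or.inr ⟨ha, h⟩

lemma blocked2_iff {n l1 l2 d : ℕ} (hn : 0 < n) (hl1pos : 0 < l1) (hl1n : l1 < n) (s : State n) :
    blocked2 n l1 l2 d s ↔
      (s.2 = 0 ∧ (s.1 - (d : ZMod n)).val < l1) ∨
      (s.2 = (d : ZMod n) ∧ 0 < s.1.val ∧ s.1.val < l1) := by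
  haveI : NeZero n := ⟨hn.ne'⟩
  unfold blocked2
  rw [occ_iff hn hl1n.le, occ_iff hn hl1n.le, occ_iff hn hl1n.le, occ_iff hn hl1n.le]
  have e1 : s.1 - ((d : ZMod n) + 1) = (s.1 - (d : ZMod n)) - 1 := by ring
  rw [e1, sub_zero, pair_iff hn hl1n, pair_iff hn hl1n]
  constructor
  · rintro (⟨ha, h | h⟩ | ⟨ha, h⟩)
    · exact Or.inl ⟨ha, h.2⟩
    · refine Or.inl ⟨ha, ?_⟩
      rw [h, sub_self, ZMod.val_zero]; exact hl1pos
    · exact Or.inr ⟨ha, h⟩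
  · rintro (⟨ha, h⟩ | ⟨ha, h⟩)
    · by_cases hz : s.1 = (d : ZMod n)
      · exact Or.inl ⟨ha, Or.inr hz⟩
      · refine Or.inl ⟨ha, Or.inl ⟨?_, h⟩⟩
        refine Nat.pos_of_ne_zero fun hv => hz ?_
        exact sub_eq_zero.1 ((ZMod.val_eq_zero _).1 hv)
    · exact Or.inr ⟨ha, h⟩


section Dyn
variable {n l1 l2 d : ℕ}

lemma step_free {s : State n} (h1 : ¬ blocked1 n l1 l2 d s) (h2 : ¬ blocked2 n l1 l2 d s) :
    step n l1 l2 d s = (s.1 + 1, s.2 + 1) := by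
  simp [step, h1, h2]

lemma step_b1 {s : State n} (h1 : blocked1 n l1 l2 d s) (h2 : ¬ blocked2 n l1 l2 d s) :
    step n l1 l2 d s = (s.1, s.2 + 1) := by
  simp [step, h1, h2]

lemma step_b2 {s : State n} (h1 : ¬ blocked1 n l1 l2 d s) (h2 : blocked2 n l1 l2 d s) :
    step n l1 l2 d s = (s.1 + 1, s.2) := by
  simp [step, h1, h2]

lemma freeState_of (s : State n)
    (h : ∀ t : ℕ, ¬ blocked1 n l1 l2 d (s.1 + (t : ZMod n), s.2 + (t : ZMod n)) ∧
                  ¬ blocked2 n l1 l2 d (s.1 + (t : ZMod n), s.2 + (t : ZMod n))) :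
    FreeState n l1 l2 d s := by
  have key : ∀ t : ℕ, (step n l1 l2 d)^[t] s = (s.1 + (t : ZMod n), s.2 + (t : ZMod n)) := by
    intro t
    induction t with
    | zero => simp
    | succ t ih =>
      rw [Function.iterate_succ_apply', ih, step_free (h t).1 (h t).2]
      push_cast
      simp only [Prod.mk.injEq]
      constructor <;> ring
  intro t
  rw [key t]
  exact h t

lemma good_free (H : Hyp n l1 l2 d) (a b : ZMod n)
    (g1 : ¬ (b - a - (d : ZMod n)).val < l2)
    (g2 : ¬ (0 < ((d : ZMod n) + (b - a)).val ∧ ((d : ZMod n) + (b - a)).val < l2))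
    (g3 : ¬ (a - b - (d : ZMod n)).val < l1)
    (g4 : ¬ (0 < ((d : ZMod n) + (a - b)).val ∧ ((d : ZMod n) + (a - b)).val < l1)) :
    FreeState n l1 l2 d (a, b) := by
  obtain ⟨hn, hd, h2d, hl1pos, hl2pos, hl2n, hl1d, hld, hA, hB⟩ := H
  have hl1n : l1 < n := by omega
  apply freeState_of
  intro t
  constructor
  · rw [blocked1_iff hn hl2pos hl2n]
    rintro (⟨hz, hv⟩ | ⟨hz, hv0, hv⟩)
    · apply g1
      have hb : b + (t : ZMod n) - (d : ZMod n) = b - a - (d : ZMod n) := by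
        simp only at hz; linear_combination hz
      simp only at hv
      rwa [hb] at hv
    · apply g2
      have hb : b + (t : ZMod n) = (d : ZMod n) + (b - a) := by
        simp only at hz; linear_combination hz
      simp only at hv0 hv
      rw [hb] at hv0 hv
      exact ⟨hv0, hv⟩
  · rw [blocked2_iff hn hl1pos hl1n]
    rintro (⟨hz, hv⟩ | ⟨hz, hv0, hv⟩)
    · apply g3
      have hb : a + (t : ZMod n) - (d : ZMod n) = a - b - (d : ZMod n) := by
        simp only at hz; linear_combination hz
      simp only at hv
      rwa [hb] at hv
    · apply g4
      have hb : a + (t : ZMod n) = (d : ZMod n) + (a - b) := by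
        simp only at hz; linear_combination hz
      simp only at hv0 hv
      rw [hb] at hv0 hv
      exact ⟨hv0, hv⟩

/-- compute the val of an expression equal to a cast difference -/
lemma val_of_eq {x y : ℕ} {u : ZMod n} (hyx : y ≤ x) (hlt : x - y < n)
    (hu : u = (x : ZMod n) - (y : ZMod n)) : u.val = x - y := by
  rw [hu, ← Nat.cast_sub hyx, ZMod.val_cast_of_lt hlt]

lemma free_dl2 (H : Hyp n l1 l2 d) : FreeState n l1 l2 d ((d : ZMod n), (l2 : ZMod n)) := by
  have hh := H
  obtain ⟨hn, hd, h2d, hl1pos, hl2pos, hl2n, hl1d, hld, hA, hB⟩ := H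
  have hl1l2 : l1 < l2 := by omega
  apply good_free hh
  · have hv : ((l2 : ZMod n) - (d : ZMod n) - (d : ZMod n)).val = (n + l2) - 2 * d := by
      apply val_of_eq (by omega) (by omega)
      push_cast [ZMod.natCast_self]
      ring
    rw [hv]; omega
  · have hv : ((d : ZMod n) + ((l2 : ZMod n) - (d : ZMod n))).val = l2 - 0 := by
      apply val_of_eq (by omega) (by omega)
      push_cast
      ring
    rw [hv]; omega
  · have hv : ((d : ZMod n) - (l2 : ZMod n) - (d : ZMod n)).val = n - l2 := by
      apply val_of_eq (by omega) (by omega)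
      push_cast [ZMod.natCast_self]
      ring
    rw [hv]; omega
  · have hv : ((d : ZMod n) + ((d : ZMod n) - (l2 : ZMod n))).val = 2 * d - l2 := by
      apply val_of_eq (by omega) (by omega)
      push_cast
      ring
    rw [hv]; omega

lemma free_l1d (H : Hyp n l1 l2 d) : FreeState n l1 l2 d ((l1 : ZMod n), (d : ZMod n)) := by
  have hh := H
  obtain ⟨hn, hd, h2d, hl1pos, hl2pos, hl2n, hl1d, hld, hA, hB⟩ := H
  have hl1l2 : l1 < l2 := by omega
  apply good_free hh
  · have hv : ((d : ZMod n) - (l1 : ZMod n) - (d : ZMod n)).val = n - l1 := by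
      apply val_of_eq (by omega) (by omega)
      push_cast [ZMod.natCast_self]
      ring
    rw [hv]; omega
  · have hv : ((d : ZMod n) + ((d : ZMod n) - (l1 : ZMod n))).val = 2 * d - l1 := by
      apply val_of_eq (by omega) (by omega)
      push_cast
      ring
    rw [hv]; omega
  · have hv : ((l1 : ZMod n) - (d : ZMod n) - (d : ZMod n)).val = (n + l1) - 2 * d := by
      apply val_of_eq (by omega) (by omega)
      push_cast [ZMod.natCast_self]
      ring
    rw [hv]; omega
  · have hv : ((d : ZMod n) + ((l1 : ZMod n) - (d : ZMod n))).val = l1 - 0 := by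
      apply val_of_eq (by omega) (by omega)
      push_cast
      ring
    rw [hv]; omega

end Dyn


section Shapes
variable {n l1 l2 d : ℕ}

lemma cast_eq_nat {x y : ℕ} (hx : x < n) (hy : y < n) (h : (x : ZMod n) = (y : ZMod n)) :
    x = y := by
  have h2 := congrArg ZMod.val h
  rwa [ZMod.val_cast_of_lt hx, ZMod.val_cast_of_lt hy] at h2

lemma cast_eq_zero_nat {x : ℕ} (hx : x < n) (h : (x : ZMod n) = 0) : x = 0 := by
  haveI : NeZero n := ⟨by omega⟩
  have h2 := congrArg ZMod.val h
  rwa [ZMod.val_cast_of_lt hx, ZMod.val_zero] at h2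

lemma phaseB (H : Hyp n l1 l2 d) (u : ℕ) (hu0 : 0 < u) (hul : u < l2) :
    ∀ j, j ≤ l2 - u →
      (step n l1 l2 d)^[j] ((d : ZMod n), ((u : ℕ) : ZMod n)) =
        ((d : ZMod n), ((u + j : ℕ) : ZMod n)) := by
  obtain ⟨hn, hd, h2d, hl1pos, hl2pos, hl2n, hl1d, hld, hA, hB⟩ := H
  have hl1n : l1 < n := by omega
  intro j
  induction j with
  | zero => intro _; simp
  | succ j ih =>
    intro hj
    rw [Function.iterate_succ_apply', ih (by omega)]
    have hb1 : blocked1 n l1 l2 d ((d : ZMod n), ((u + j : ℕ) : ZMod n)) := by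
      rw [blocked1_iff hn hl2pos hl2n]
      right
      refine ⟨rfl, ?_⟩
      show 0 < (((u + j : ℕ) : ZMod n)).val ∧ (((u + j : ℕ) : ZMod n)).val < l2
      rw [ZMod.val_cast_of_lt (show u + j < n by omega)]
      omega
    have hb2 : ¬ blocked2 n l1 l2 d ((d : ZMod n), ((u + j : ℕ) : ZMod n)) := by
      rw [blocked2_iff hn hl1pos hl1n]
      rintro (⟨hz, -⟩ | ⟨hz, -, -⟩)
      · have hz' : ((u + j : ℕ) : ZMod n) = 0 := hz
        have := cast_eq_zero_nat (show u + j < n by omega) hz'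
        omega
      · have hz' : ((u + j : ℕ) : ZMod n) = ((d : ℕ) : ZMod n) := hz
        have := cast_eq_nat (show u + j < n by omega) (show d < n by omega) hz'
        omega
    rw [step_b1 hb1 hb2]
    simp only [Prod.mk.injEq]
    exact ⟨by trivial, by push_cast; ring⟩

lemma shapeB_free (H : Hyp n l1 l2 d) (b : ZMod n) (h0 : 0 < b.val) (hb : b.val < l2) :
    ∃ k, FreeState n l1 l2 d ((step n l1 l2 d)^[k] ((d : ZMod n), b)) := by
  haveI : NeZero n := ⟨H.hn.ne'⟩
  obtain ⟨v, hlt, rfl⟩ : ∃ v : ℕ, v < n ∧ b = ((v : ℕ) : ZMod n) :=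
    ⟨b.val, ZMod.val_lt b, (ZMod.natCast_zmod_val b).symm⟩
  rw [ZMod.val_cast_of_lt hlt] at h0 hb
  refine ⟨l2 - v, ?_⟩
  rw [phaseB H v h0 hb (l2 - v) le_rfl, show v + (l2 - v) = l2 by omega]
  exact free_dl2 H

lemma phaseA1 (H : Hyp n l1 l2 d) (u : ℕ) (hul : u < l2) :
    ∀ j, j ≤ l2 - u →
      (step n l1 l2 d)^[j] ((0 : ZMod n), ((d + u : ℕ) : ZMod n)) =
        ((0 : ZMod n), ((d + u + j : ℕ) : ZMod n)) := by
  obtain ⟨hn, hd, h2d, hl1pos, hl2pos, hl2n, hl1d, hld, hA, hB⟩ := H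
  haveI : NeZero n := ⟨hn.ne'⟩
  have hl1n : l1 < n := by omega
  intro j
  induction j with
  | zero => intro _; simp
  | succ j ih =>
    intro hj
    rw [Function.iterate_succ_apply', ih (by omega)]
    have hb1 : blocked1 n l1 l2 d ((0 : ZMod n), ((d + u + j : ℕ) : ZMod n)) := by
      rw [blocked1_iff hn hl2pos hl2n]
      left
      refine ⟨rfl, ?_⟩
      show (((d + u + j : ℕ) : ZMod n) - ((d : ℕ) : ZMod n)).val < l2
      have he : ((d + u + j : ℕ) : ZMod n) - ((d : ℕ) : ZMod n) = ((u + j : ℕ) : ZMod n) := by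
        push_cast; ring
      rw [he, ZMod.val_cast_of_lt (show u + j < n by omega)]
      omega
    have hb2 : ¬ blocked2 n l1 l2 d ((0 : ZMod n), ((d + u + j : ℕ) : ZMod n)) := by
      rw [blocked2_iff hn hl1pos hl1n]
      rintro (⟨hz, -⟩ | ⟨-, h0', -⟩)
      · have hz' : ((d + u + j : ℕ) : ZMod n) = 0 := hz
        have := cast_eq_zero_nat (show d + u + j < n by omega) hz'
        omega
      · have h0'' : 0 < (0 : ZMod n).val := h0'
        rw [ZMod.val_zero] at h0''
        omega
    rw [step_b1 hb1 hb2]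
    simp only [Prod.mk.injEq]
    exact ⟨by trivial, by push_cast; ring⟩

lemma phaseA2 (H : Hyp n l1 l2 d) :
    ∀ j, j ≤ d →
      (step n l1 l2 d)^[j] ((0 : ZMod n), ((d + l2 : ℕ) : ZMod n)) =
        (((j : ℕ) : ZMod n), ((d + l2 + j : ℕ) : ZMod n)) := by
  obtain ⟨hn, hd, h2d, hl1pos, hl2pos, hl2n, hl1d, hld, hA, hB⟩ := H
  haveI : NeZero n := ⟨hn.ne'⟩
  have hl1n : l1 < n := by omega
  intro j
  induction j with
  | zero => intro _; simp
  | succ j ih =>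
    intro hj
    rw [Function.iterate_succ_apply', ih (by omega)]
    have hb1 : ¬ blocked1 n l1 l2 d (((j : ℕ) : ZMod n), ((d + l2 + j : ℕ) : ZMod n)) := by
      rw [blocked1_iff hn hl2pos hl2n]
      rintro (⟨-, hv⟩ | ⟨hz, -, -⟩)
      · have hv' : (((d + l2 + j : ℕ) : ZMod n) - ((d : ℕ) : ZMod n)).val < l2 := hv
        have he : ((d + l2 + j : ℕ) : ZMod n) - ((d : ℕ) : ZMod n) = ((l2 + j : ℕ) : ZMod n) := by
          push_cast; ring
        rw [he, ZMod.val_cast_of_lt (show l2 + j < n by omega)] at hv'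
        omega
      · have hz' : ((j : ℕ) : ZMod n) = ((d : ℕ) : ZMod n) := hz
        have := cast_eq_nat (show j < n by omega) (show d < n by omega) hz'
        omega
    have hb2 : ¬ blocked2 n l1 l2 d (((j : ℕ) : ZMod n), ((d + l2 + j : ℕ) : ZMod n)) := by
      rw [blocked2_iff hn hl1pos hl1n]
      rintro (⟨hz, hv⟩ | ⟨hz, -, -⟩)
      · have hz' : ((d + l2 + j : ℕ) : ZMod n) = 0 := hz
        have hv' : (((j : ℕ) : ZMod n) - ((d : ℕ) : ZMod n)).val < l1 := hv
        by_cases hcase : d + l2 + j < n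
        · have := cast_eq_zero_nat hcase hz'
          omega
        · have he : ((d + l2 + j : ℕ) : ZMod n) = ((d + l2 + j - n : ℕ) : ZMod n) := by
            rw [Nat.cast_sub (by omega)]
            simp [ZMod.natCast_self]
          rw [he] at hz'
          have hj0 : d + l2 + j - n = 0 :=
            cast_eq_zero_nat (show d + l2 + j - n < n by omega) hz'
          have he2 : ((j : ℕ) : ZMod n) - ((d : ℕ) : ZMod n) = ((n + j - d : ℕ) : ZMod n) := by
            rw [Nat.cast_sub (by omega)]
            push_cast [ZMod.natCast_self]
            ring
          rw [he2, ZMod.val_cast_of_lt (show n + j - d < n by omega)] at hv'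
          omega
      · have hz' : ((d + l2 + j : ℕ) : ZMod n) = ((d : ℕ) : ZMod n) := hz
        have he : ((d + l2 + j : ℕ) : ZMod n) - ((d : ℕ) : ZMod n) = ((l2 + j : ℕ) : ZMod n) := by
          push_cast; ring
        have hz2 : ((l2 + j : ℕ) : ZMod n) = 0 := by
          linear_combination hz' - he
        have := cast_eq_zero_nat (show l2 + j < n by omega) hz2
        omega
    rw [step_free hb1 hb2]
    simp only [Prod.mk.injEq]
    exact ⟨by push_cast; ring, by push_cast; ring⟩

lemma shapeA_free (H : Hyp n l1 l2 d) (b : ZMod n) (hb : (b - (d : ZMod n)).val < l2) :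
    ∃ k, FreeState n l1 l2 d ((step n l1 l2 d)^[k] ((0 : ZMod n), b)) := by
  have hh := H
  obtain ⟨hn, hd, h2d, hl1pos, hl2pos, hl2n, hl1d, hld, hA, hB⟩ := H
  haveI : NeZero n := ⟨hn.ne'⟩
  obtain ⟨u, hul, rfl⟩ : ∃ u : ℕ, u < l2 ∧ b = ((d + u : ℕ) : ZMod n) := by
    refine ⟨(b - (d : ZMod n)).val, hb, ?_⟩
    have h0 : (((b - (d : ZMod n)).val : ℕ) : ZMod n) = b - (d : ZMod n) :=
      ZMod.natCast_zmod_val _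
    push_cast
    linear_combination -h0
  have hble : n ≤ d + l2 + d := by omega
  have he : ((d + l2 + d : ℕ) : ZMod n) = ((d + l2 + d - n : ℕ) : ZMod n) := by
    rw [Nat.cast_sub hble]
    simp [ZMod.natCast_self]
  obtain ⟨k, hk⟩ := shapeB_free hh ((d + l2 + d : ℕ) : ZMod n)
    (by rw [he, ZMod.val_cast_of_lt (by omega)]; omega)
    (by rw [he, ZMod.val_cast_of_lt (by omega)]; omega)
  refine ⟨k + (d + (l2 - u)), ?_⟩
  rw [Function.iterate_add_apply, Function.iterate_add_apply,
    phaseA1 hh u hul (l2 - u) le_rfl, show d + u + (l2 - u) = d + l2 by omega,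
    phaseA2 hh d le_rfl]
  exact hk

lemma phaseC1 (H : Hyp n l1 l2 d) (u : ℕ) (hul : u < l1) :
    ∀ j, j ≤ l1 - u →
      (step n l1 l2 d)^[j] (((d + u : ℕ) : ZMod n), (0 : ZMod n)) =
        (((d + u + j : ℕ) : ZMod n), (0 : ZMod n)) := by
  obtain ⟨hn, hd, h2d, hl1pos, hl2pos, hl2n, hl1d, hld, hA, hB⟩ := H
  haveI : NeZero n := ⟨hn.ne'⟩
  have hl1n : l1 < n := by omega
  intro j
  induction j with
  | zero => intro _; simp
  | succ j ih =>
    intro hj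
    rw [Function.iterate_succ_apply', ih (by omega)]
    have hb2 : blocked2 n l1 l2 d (((d + u + j : ℕ) : ZMod n), (0 : ZMod n)) := by
      rw [blocked2_iff hn hl1pos hl1n]
      left
      refine ⟨rfl, ?_⟩
      show (((d + u + j : ℕ) : ZMod n) - ((d : ℕ) : ZMod n)).val < l1
      have he : ((d + u + j : ℕ) : ZMod n) - ((d : ℕ) : ZMod n) = ((u + j : ℕ) : ZMod n) := by
        push_cast; ring
      rw [he, ZMod.val_cast_of_lt (show u + j < n by omega)]
      omega
    have hb1 : ¬ blocked1 n l1 l2 d (((d + u + j : ℕ) : ZMod n), (0 : ZMod n)) := by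
      rw [blocked1_iff hn hl2pos hl2n]
      rintro (⟨hz, -⟩ | ⟨-, h0', -⟩)
      · have hz' : ((d + u + j : ℕ) : ZMod n) = 0 := hz
        have := cast_eq_zero_nat (show d + u + j < n by omega) hz'
        omega
      · have h0'' : 0 < (0 : ZMod n).val := h0'
        rw [ZMod.val_zero] at h0''
        omega
    rw [step_b2 hb1 hb2]
    simp only [Prod.mk.injEq]
    exact ⟨by push_cast; ring, by trivial⟩

lemma phaseC2 (H : Hyp n l1 l2 d) :
    ∀ j, j ≤ n - d - l1 →
      (step n l1 l2 d)^[j] (((d + l1 : ℕ) : ZMod n), (0 : ZMod n)) =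
        (((d + l1 + j : ℕ) : ZMod n), ((j : ℕ) : ZMod n)) := by
  obtain ⟨hn, hd, h2d, hl1pos, hl2pos, hl2n, hl1d, hld, hA, hB⟩ := H
  haveI : NeZero n := ⟨hn.ne'⟩
  have hl1n : l1 < n := by omega
  intro j
  induction j with
  | zero => intro _; simp
  | succ j ih =>
    intro hj
    rw [Function.iterate_succ_apply', ih (by omega)]
    have hb1 : ¬ blocked1 n l1 l2 d (((d + l1 + j : ℕ) : ZMod n), ((j : ℕ) : ZMod n)) := by
      rw [blocked1_iff hn hl2pos hl2n]
      rintro (⟨hz, -⟩ | ⟨hz, -, -⟩)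
      · have hz' : ((d + l1 + j : ℕ) : ZMod n) = 0 := hz
        have := cast_eq_zero_nat (show d + l1 + j < n by omega) hz'
        omega
      · have hz' : ((d + l1 + j : ℕ) : ZMod n) = ((d : ℕ) : ZMod n) := hz
        have := cast_eq_nat (show d + l1 + j < n by omega) (show d < n by omega) hz'
        omega
    have hb2 : ¬ blocked2 n l1 l2 d (((d + l1 + j : ℕ) : ZMod n), ((j : ℕ) : ZMod n)) := by
      rw [blocked2_iff hn hl1pos hl1n]
      rintro (⟨-, hv⟩ | ⟨hz, hv0, hv⟩)
      · have hv' : (((d + l1 + j : ℕ) : ZMod n) - ((d : ℕ) : ZMod n)).val < l1 := hv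
        have he : ((d + l1 + j : ℕ) : ZMod n) - ((d : ℕ) : ZMod n) = ((l1 + j : ℕ) : ZMod n) := by
          push_cast; ring
        rw [he, ZMod.val_cast_of_lt (show l1 + j < n by omega)] at hv'
        omega
      · have hjd : j = d := cast_eq_nat (show j < n by omega) (show d < n by omega) hz
        have hv0' : 0 < (((d + l1 + j : ℕ) : ZMod n)).val := hv0
        have hv' : (((d + l1 + j : ℕ) : ZMod n)).val < l1 := hv
        by_cases hcase : d + l1 + j = n
        · rw [hcase, ZMod.natCast_self, ZMod.val_zero] at hv0'
          omega
        · rw [ZMod.val_cast_of_lt (show d + l1 + j < n by omega)] at hv'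
          omega
    rw [step_free hb1 hb2]
    simp only [Prod.mk.injEq]
    exact ⟨by push_cast; ring, by push_cast; ring⟩

lemma shapeC_free (H : Hyp n l1 l2 d) (a : ZMod n) (ha : (a - (d : ZMod n)).val < l1) :
    ∃ k, FreeState n l1 l2 d ((step n l1 l2 d)^[k] (a, (0 : ZMod n))) := by
  have hh := H
  obtain ⟨hn, hd, h2d, hl1pos, hl2pos, hl2n, hl1d, hld, hA, hB⟩ := H
  haveI : NeZero n := ⟨hn.ne'⟩
  obtain ⟨u, hul, rfl⟩ : ∃ u : ℕ, u < l1 ∧ a = ((d + u : ℕ) : ZMod n) := by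
    refine ⟨(a - (d : ZMod n)).val, ha, ?_⟩
    have h0 : (((a - (d : ZMod n)).val : ℕ) : ZMod n) = a - (d : ZMod n) :=
      ZMod.natCast_zmod_val _
    push_cast
    linear_combination -h0
  have hz2 : ((d + l1 + (n - d - l1) : ℕ) : ZMod n) = (0 : ZMod n) := by
    rw [show d + l1 + (n - d - l1) = n by omega, ZMod.natCast_self]
  have hbA : ((((n - d - l1 : ℕ) : ZMod n)) - ((d : ℕ) : ZMod n)).val < l2 := by
    have he : ((n - d - l1 : ℕ) : ZMod n) - ((d : ℕ) : ZMod n) = ((n - 2 * d - l1 : ℕ) : ZMod n) := by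
      have e1 : (n - d - l1 : ℕ) = (n - 2 * d - l1) + d := by omega
      rw [e1]
      push_cast
      ring
    rw [he, ZMod.val_cast_of_lt (show n - 2 * d - l1 < n by omega)]
    omega
  obtain ⟨k, hk⟩ := shapeA_free hh ((n - d - l1 : ℕ) : ZMod n) hbA
  refine ⟨k + ((n - d - l1) + (l1 - u)), ?_⟩
  rw [Function.iterate_add_apply, Function.iterate_add_apply,
    phaseC1 hh u hul (l1 - u) le_rfl, show d + u + (l1 - u) = d + l1 by omega,
    phaseC2 hh (n - d - l1) le_rfl, hz2]
  exact hk

lemma shapeD_free (H : Hyp n l1 l2 d) (a : ZMod n) (h0 : 0 < a.val) (ha : a.val < l1) :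
    ∃ k, FreeState n l1 l2 d ((step n l1 l2 d)^[k] (a, (d : ZMod n))) := by
  have hh := H
  obtain ⟨hn, hd, h2d, hl1pos, hl2pos, hl2n, hl1d, hld, hA, hB⟩ := H
  have hl1n : l1 < n := by omega
  haveI : NeZero n := ⟨hn.ne'⟩
  obtain ⟨v, hlt, rfl⟩ : ∃ v : ℕ, v < n ∧ a = ((v : ℕ) : ZMod n) :=
    ⟨a.val, ZMod.val_lt a, (ZMod.natCast_zmod_val a).symm⟩
  rw [ZMod.val_cast_of_lt hlt] at h0 ha
  have key : ∀ j, j ≤ l1 - v →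
      (step n l1 l2 d)^[j] (((v : ℕ) : ZMod n), (d : ZMod n)) =
        (((v + j : ℕ) : ZMod n), (d : ZMod n)) := by
    intro j
    induction j with
    | zero => intro _; simp
    | succ j ih =>
      intro hj
      rw [Function.iterate_succ_apply', ih (by omega)]
      have hb2 : blocked2 n l1 l2 d (((v + j : ℕ) : ZMod n), (d : ZMod n)) := by
        rw [blocked2_iff hn hl1pos hl1n]
        right
        refine ⟨rfl, ?_⟩
        show 0 < (((v + j : ℕ) : ZMod n)).val ∧ (((v + j : ℕ) : ZMod n)).val < l1
        rw [ZMod.val_cast_of_lt (show v + j < n by omega)]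
        omega
      have hb1 : ¬ blocked1 n l1 l2 d (((v + j : ℕ) : ZMod n), (d : ZMod n)) := by
        rw [blocked1_iff hn hl2pos hl2n]
        rintro (⟨hz, -⟩ | ⟨hz, -, -⟩)
        · have hz' : ((v + j : ℕ) : ZMod n) = 0 := hz
          have := cast_eq_zero_nat (show v + j < n by omega) hz'
          omega
        · have hz' : ((v + j : ℕ) : ZMod n) = ((d : ℕ) : ZMod n) := hz
          have := cast_eq_nat (show v + j < n by omega) (show d < n by omega) hz'
          omega
      rw [step_b2 hb1 hb2]
      simp only [Prod.mk.injEq]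
      exact ⟨by push_cast; ring, by trivial⟩
  refine ⟨l1 - v, ?_⟩
  rw [key (l1 - v) le_rfl, show v + (l1 - v) = l1 by omega]
  exact free_l1d hh

end Shapes



theorem stmt6 (n l1 l2 d : ℕ) (hn : 0 < n) (hd : 0 < d) (h2d : 2 * d ≤ n)
    (hl1pos : 0 < l1) (hl1n : l1 < n) (hl2pos : 0 < l2) (hl2n : l2 < n) (h12 : l1 ≤ l2)
    (h1 : l2 ≤ d) (h2 : l1 ≤ n - 2 * d) (h3 : l2 > n - 2 * d) :
    ∀ s : State n, Admissible n l1 l2 d s →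
      ∃ t0 : ℕ, FreeState n l1 l2 d ((step n l1 l2 d)^[t0] s) := by
  have H : Hyp n l1 l2 d :=
    ⟨hn, hd, h2d, hl1pos, hl2pos, hl2n, by omega, h1, by omega, by omega⟩
  intro s _
  by_cases hfree : ∀ t : ℕ, ¬ blocked1 n l1 l2 d ((step n l1 l2 d)^[t] s) ∧
      ¬ blocked2 n l1 l2 d ((step n l1 l2 d)^[t] s)
  · exact ⟨0, by simpa [FreeState] using hfree⟩
  · rw [not_forall] at hfree
    obtain ⟨t, ht⟩ := hfree
    have hb : blocked1 n l1 l2 d ((step n l1 l2 d)^[t] s) ∨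
        blocked2 n l1 l2 d ((step n l1 l2 d)^[t] s) := by
      by_contra hc
      push_neg at hc
      exact ht ⟨hc.1, hc.2⟩
    set s' := (step n l1 l2 d)^[t] s with hs'
    rcases hb with h | h
    · rw [blocked1_iff hn hl2pos hl2n] at h
      rcases h with ⟨h0, hv⟩ | ⟨h0, hv0, hv⟩
      · obtain ⟨k, hk⟩ := shapeA_free H s'.2 hv
        refine ⟨k + t, ?_⟩
        rw [Function.iterate_add_apply, ← hs', show s' = ((0 : ZMod n), s'.2) by
          rw [← h0]]
        exact hk
      · obtain ⟨k, hk⟩ := shapeB_free H s'.2 hv0 hv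
        refine ⟨k + t, ?_⟩
        rw [Function.iterate_add_apply, ← hs', show s' = ((d : ZMod n), s'.2) by
          rw [← h0]]
        exact hk
    · rw [blocked2_iff hn hl1pos hl1n] at h
      rcases h with ⟨h0, hv⟩ | ⟨h0, hv0, hv⟩
      · obtain ⟨k, hk⟩ := shapeC_free H s'.1 hv
        refine ⟨k + t, ?_⟩
        rw [Function.iterate_add_apply, ← hs', show s' = (s'.1, (0 : ZMod n)) by
          rw [← h0]]
        exact hk
      · obtain ⟨k, hk⟩ := shapeD_free H s'.1 hv0 hv
        refine ⟨k + t, ?_⟩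
        rw [Function.iterate_add_apply, ← hs', show s' = (s'.1, (d : ZMod n)) by
          rw [← h0]]
        exact hk

end TwoContour
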